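/- Let λ̄ ≥ 1 and, for each k ∈ ℤ³ with |k| = λ̄, let A_k ∈ ℝ³ satisfy A_k · k = 0, |A_k| = 1/√2, and A_{−k} = A_k; set B_k := A_k + i (k/|k|) × A_k ∈ ℂ³. Then for any coefficients a_k ∈ ℂ with conj(a_k) = a_{−k}, the (real-valued) vector field W(ξ) := Σ_{|k|=λ̄} a_k B_k e^{i k·ξ} satisfies div(W ⊗ W) = ∇(|W|²/2); in particular (W, −|W|²/2) is a stationary solution of the incompressible Euler equations. -/

import Mathlib

open scoped BigOperators

noncomputable section

/-- The cross product of two vectors in `ℝ³`. -/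
def cross3 (u v : Fin 3 → ℝ) : Fin 3 → ℝ :=
  ![u 1 * v 2 - u 2 * v 1, u 2 * v 0 - u 0 * v 2, u 0 * v 1 - u 1 * v 0]

/-! ### Auxiliary material -/

/-- The linear functional `x ↦ ∑ j, k j * x j`. -/
def Lk (k : Fin 3 → ℤ) : (Fin 3 → ℝ) →L[ℝ] ℝ :=
  ∑ j, (k j : ℝ) • ContinuousLinearMap.proj j

lemma Lk_apply (k : Fin 3 → ℤ) (x : Fin 3 → ℝ) : Lk k x = ∑ j, (k j : ℝ) * x j := by
  simp [Lk]

lemma Lk_single (k : Fin 3 → ℤ) (j : Fin 3) : Lk k (Pi.single j 1) = (k j : ℝ) := by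
  rw [Lk_apply]
  simp [Pi.single_apply]

/-- The Fourier kernel `e^{i k · x}`. -/
def Ek (k : Fin 3 → ℤ) (x : Fin 3 → ℝ) : ℂ :=
  Complex.exp (Complex.I * ((∑ j, (k j : ℝ) * x j : ℝ) : ℂ))

lemma hasFDerivAt_Ek (k : Fin 3 → ℤ) (ξ : Fin 3 → ℝ) :
    HasFDerivAt (fun x => Ek k x)
      ((Ek k ξ * Complex.I) • (Complex.ofRealCLM.comp (Lk k))) ξ := by
  set M : (Fin 3 → ℝ) →L[ℝ] ℂ := Complex.I • (Complex.ofRealCLM.comp (Lk k)) with hM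
  have hMx : ∀ x, M x = Complex.I * ((∑ j, (k j : ℝ) * x j : ℝ) : ℂ) := by
    intro x
    simp [hM, Lk_apply, smul_eq_mul]
  have h1 : HasFDerivAt (fun x => Complex.exp (M x)) (Complex.exp (M ξ) • M) ξ :=
    (Complex.hasDerivAt_exp (M ξ)).comp_hasFDerivAt ξ M.hasFDerivAt
  have h2 : (fun x => Complex.exp (M x)) = fun x => Ek k x := by
    funext x; rw [Ek, hMx]
  rw [h2] at h1
  convert h1 using 1
  rw [hM, smul_smul, Ek, hMx]

lemma hasFDerivAt_term (k : Fin 3 → ℤ) (c : ℂ) (ξ : Fin 3 → ℝ) :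
    HasFDerivAt (fun x => (c * Ek k x).re)
      (Complex.reCLM.comp ((c * Ek k ξ * Complex.I) • (Complex.ofRealCLM.comp (Lk k)))) ξ := by
  have h1 : HasFDerivAt (fun x => c * Ek k x)
      ((c * Ek k ξ * Complex.I) • (Complex.ofRealCLM.comp (Lk k))) ξ := by
    have := (hasFDerivAt_Ek k ξ).const_mul c
    refine this.congr_fderiv ?_
    rw [smul_smul]; ring_nf
  exact (Complex.reCLM.hasFDerivAt).comp ξ h1

lemma term_deriv_apply (k : Fin 3 → ℤ) (c : ℂ) (ξ : Fin 3 → ℝ) (j : Fin 3) :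
    (Complex.reCLM.comp ((c * Ek k ξ * Complex.I) • (Complex.ofRealCLM.comp (Lk k))))
      (Pi.single j 1) = (c * Ek k ξ * (Complex.I * ((k j : ℝ) : ℂ))).re := by
  simp [Lk_single, smul_eq_mul]
  ring_nf

lemma real_sum (S : Finset (Fin 3 → ℤ)) (hSneg : ∀ k ∈ S, -k ∈ S)
    (f : (Fin 3 → ℤ) → ℂ) (hf : ∀ k ∈ S, (starRingEnd ℂ) (f k) = f (-k)) :
    (∑ k ∈ S, f k).im = 0 := by
  have h : (starRingEnd ℂ) (∑ k ∈ S, f k) = ∑ k ∈ S, f k := by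
    rw [map_sum]
    rw [Finset.sum_congr rfl hf]
    exact Finset.sum_nbij' (fun k => -k) (fun k => -k)
      (fun k hk => hSneg k hk) (fun k hk => hSneg k hk)
      (fun k _ => neg_neg k) (fun k _ => neg_neg k) (fun k _ => rfl)
  exact Complex.conj_eq_iff_im.mp h

lemma Econj (k : Fin 3 → ℤ) (x : Fin 3 → ℝ) :
    (starRingEnd ℂ) (Ek k x) = Ek (-k) x := by
  rw [Ek, Ek, ← Complex.exp_conj]
  congr 1
  simp only [map_mul, Complex.conj_I, Complex.conj_ofReal]
  have : (∑ j, ((-k) j : ℝ) * x j) = -∑ j, (k j : ℝ) * x j := by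
    rw [← Finset.sum_neg_distrib]
    refine Finset.sum_congr rfl fun j _ => ?_
    simp
  rw [this]
  push_cast
  ring

lemma crossneg (lam : ℝ) (κ α : Fin 3 → ℝ) (i : Fin 3) :
    cross3 (fun j => -κ j / lam) α i = - cross3 (fun j => κ j / lam) α i := by
  fin_cases i <;> simp [cross3] <;> ring

lemma conj_re_im (x y : ℝ) :
    (starRingEnd ℂ) ((x : ℂ) + Complex.I * (y : ℂ)) = (x : ℂ) + Complex.I * ((-y : ℝ) : ℂ) := by
  simp only [map_add, map_mul, Complex.conj_I, Complex.conj_ofReal]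
  push_cast
  ring

lemma crossB (lam : ℝ) (hlam : lam ≠ 0) (κ α : Fin 3 → ℝ)
    (hn : κ 0 ^ 2 + κ 1 ^ 2 + κ 2 ^ 2 = lam ^ 2)
    (hp : α 0 * κ 0 + α 1 * κ 1 + α 2 * κ 2 = 0)
    (b : Fin 3 → ℂ)
    (hb : ∀ i, b i = (α i : ℂ) + Complex.I * ((cross3 (fun j => κ j / lam) α i : ℝ) : ℂ)) :
    ((κ 1 : ℂ) * b 2 - (κ 2 : ℂ) * b 1 = -(Complex.I * lam) * b 0) ∧
    ((κ 2 : ℂ) * b 0 - (κ 0 : ℂ) * b 2 = -(Complex.I * lam) * b 1) ∧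
    ((κ 0 : ℂ) * b 1 - (κ 1 : ℂ) * b 0 = -(Complex.I * lam) * b 2) := by
  refine ⟨?_, ?_, ?_⟩ <;>
  · simp only [hb, cross3]
    simp only [Matrix.cons_val_zero, Matrix.cons_val_one, Matrix.head_cons,
      Matrix.cons_val_two, Matrix.tail_cons]
    apply Complex.ext <;>
      simp [Complex.add_re, Complex.add_im, Complex.mul_re, Complex.mul_im,
        Complex.I_re, Complex.I_im, Complex.ofReal_re, Complex.ofReal_im,
        Complex.neg_re, Complex.neg_im] <;>
      field_simp <;>
      first
        | linear_combination κ 0 * hp - α 0 * hn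
        | linear_combination κ 1 * hp - α 1 * hn
        | linear_combination κ 2 * hp - α 2 * hn

lemma pairId (lam : ℝ) (κ μ : Fin 3 → ℝ) (bk bl : Fin 3 → ℂ)
    (hk0 : (κ 1 : ℂ) * bk 2 - (κ 2 : ℂ) * bk 1 = -(Complex.I * lam) * bk 0)
    (hk1 : (κ 2 : ℂ) * bk 0 - (κ 0 : ℂ) * bk 2 = -(Complex.I * lam) * bk 1)
    (hk2 : (κ 0 : ℂ) * bk 1 - (κ 1 : ℂ) * bk 0 = -(Complex.I * lam) * bk 2)
    (hl0 : (μ 1 : ℂ) * bl 2 - (μ 2 : ℂ) * bl 1 = -(Complex.I * lam) * bl 0)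
    (hl1 : (μ 2 : ℂ) * bl 0 - (μ 0 : ℂ) * bl 2 = -(Complex.I * lam) * bl 1)
    (hl2 : (μ 0 : ℂ) * bl 1 - (μ 1 : ℂ) * bl 0 = -(Complex.I * lam) * bl 2) :
    ∀ i, bk i * ((κ 0 : ℂ) * bl 0 + (κ 1 : ℂ) * bl 1 + (κ 2 : ℂ) * bl 2)
        + bl i * ((μ 0 : ℂ) * bk 0 + (μ 1 : ℂ) * bk 1 + (μ 2 : ℂ) * bk 2)
      = ((κ i : ℂ) + (μ i : ℂ)) * (bk 0 * bl 0 + bk 1 * bl 1 + bk 2 * bl 2) := by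
  intro i
  fin_cases i <;> simp only [Fin.zero_eta, Fin.mk_one, Fin.reduceFinMk, Fin.isValue]
  · linear_combination (-(bl 1)) * hk2 + (bl 2) * hk1 + (-(bk 1)) * hl2 + (bk 2) * hl1
  · linear_combination (-(bl 2)) * hk0 + (bl 0) * hk2 + (-(bk 2)) * hl0 + (bk 0) * hl2
  · linear_combination (-(bl 0)) * hk1 + (bl 1) * hk0 + (-(bk 0)) * hl1 + (bk 1) * hl0

lemma Bperp (lam : ℝ) (κ α : Fin 3 → ℝ)
    (hp : α 0 * κ 0 + α 1 * κ 1 + α 2 * κ 2 = 0)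
    (b : Fin 3 → ℂ)
    (hb : ∀ i, b i = (α i : ℂ) + Complex.I * ((cross3 (fun j => κ j / lam) α i : ℝ) : ℂ)) :
    b 0 * (κ 0 : ℂ) + b 1 * (κ 1 : ℂ) + b 2 * (κ 2 : ℂ) = 0 := by
  have hpC : ((α 0 * κ 0 + α 1 * κ 1 + α 2 * κ 2 : ℝ) : ℂ) = 0 := by rw [hp]; simp
  push_cast at hpC
  simp only [hb, cross3, Matrix.cons_val_zero, Matrix.cons_val_one, Matrix.head_cons,
    Matrix.cons_val_two, Matrix.tail_cons]
  push_cast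
  linear_combination hpC

lemma double_sum_anti {α : Type*} (S : Finset α) (P Q : α → α → ℂ)
    (h : ∀ k ∈ S, ∀ l ∈ S, (P k l - Q k l) + (P l k - Q l k) = 0) :
    ∑ l ∈ S, ∑ k ∈ S, P k l = ∑ l ∈ S, ∑ k ∈ S, Q k l := by
  have h1 : ∑ l ∈ S, ∑ k ∈ S, ((P k l - Q k l) + (P l k - Q l k)) = 0 :=
    Finset.sum_eq_zero fun l hl => Finset.sum_eq_zero fun k hk => h k hk l hl
  simp only [Finset.sum_add_distrib] at h1
  rw [show (∑ l ∈ S, ∑ k ∈ S, (P l k - Q l k)) = ∑ l ∈ S, ∑ k ∈ S, (P k l - Q k l) from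
    Finset.sum_comm] at h1
  have h2 : ∑ l ∈ S, ∑ k ∈ S, (P k l - Q k l) = 0 := add_self_eq_zero.mp h1
  simp only [Finset.sum_sub_distrib] at h2
  exact sub_eq_zero.mp h2

lemma mul_re_of_im (z w : ℂ) (hz : z.im = 0) (hw : w.im = 0) :
    z.re * w.re = (z * w).re := by
  rw [Complex.mul_re, hz, hw]
  ring

theorem beltrami_stationary_euler
    (lam : ℝ) (hlam : 1 ≤ lam)
    (S : Finset (Fin 3 → ℤ))
    (hSnorm : ∀ k ∈ S, Real.sqrt (∑ i, ((k i : ℝ)) ^ 2) = lam)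
    (hSneg : ∀ k ∈ S, -k ∈ S)
    (A : (Fin 3 → ℤ) → (Fin 3 → ℝ))
    (hAperp : ∀ k ∈ S, ∑ i, A k i * (k i : ℝ) = 0)
    (hAnorm : ∀ k ∈ S, Real.sqrt (∑ i, (A k i) ^ 2) = 1 / Real.sqrt 2)
    (hAneg : ∀ k ∈ S, A (-k) = A k)
    (a : (Fin 3 → ℤ) → ℂ)
    (ha : ∀ k ∈ S, (starRingEnd ℂ) (a k) = a (-k))
    (B : (Fin 3 → ℤ) → (Fin 3 → ℂ))
    (hB : ∀ k i, B k i = (A k i : ℂ)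
      + Complex.I * ((cross3 (fun j => (k j : ℝ) / lam) (A k) i : ℝ) : ℂ))
    (W : (Fin 3 → ℝ) → (Fin 3 → ℂ))
    (hW : ∀ ξ i, W ξ i
      = ∑ k ∈ S, a k * B k i * Complex.exp (Complex.I * ((∑ j, (k j : ℝ) * ξ j : ℝ) : ℂ)))
    -- the real-valued vector field determined by `W`
    (Wr : (Fin 3 → ℝ) → (Fin 3 → ℝ))
    (hWr : ∀ ξ i, Wr ξ i = (W ξ i).re) :
    -- `div (W ⊗ W) = ∇ (|W|²/2)`
    (∀ ξ (i : Fin 3),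
      (∑ j, fderiv ℝ (fun x => Wr x i * Wr x j) ξ (Pi.single j 1))
        = fderiv ℝ (fun x => (∑ j, (Wr x j) ^ 2) / 2) ξ (Pi.single i 1)) ∧
    -- in particular `(W, −|W|²/2)` is a stationary solution of the Euler equations:
    (∀ ξ (i : Fin 3),
      (∑ j, fderiv ℝ (fun x => Wr x i * Wr x j) ξ (Pi.single j 1))
        + fderiv ℝ (fun x => -((∑ j, (Wr x j) ^ 2) / 2)) ξ (Pi.single i 1) = 0) ∧
    (∀ ξ, ∑ i, fderiv ℝ (fun x => Wr x i) ξ (Pi.single i 1) = 0) := by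
  have hlam0 : lam ≠ 0 := by linarith
  -- basic component facts
  have hn' : ∀ k ∈ S, ((k 0 : ℝ)) ^ 2 + ((k 1 : ℝ)) ^ 2 + ((k 2 : ℝ)) ^ 2 = lam ^ 2 := by
    intro k hk
    have hs : (0 : ℝ) ≤ ∑ i, ((k i : ℝ)) ^ 2 := Finset.sum_nonneg fun i _ => sq_nonneg _
    have h2 := Real.sq_sqrt hs
    rw [hSnorm k hk, Fin.sum_univ_three] at h2
    linarith
  have hp' : ∀ k ∈ S, A k 0 * (k 0 : ℝ) + A k 1 * (k 1 : ℝ) + A k 2 * (k 2 : ℝ) = 0 := by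
    intro k hk; have := hAperp k hk; rwa [Fin.sum_univ_three] at this
  have hX : ∀ k ∈ S,
      (((k 1 : ℝ) : ℂ) * B k 2 - ((k 2 : ℝ) : ℂ) * B k 1 = -(Complex.I * lam) * B k 0) ∧
      (((k 2 : ℝ) : ℂ) * B k 0 - ((k 0 : ℝ) : ℂ) * B k 2 = -(Complex.I * lam) * B k 1) ∧
      (((k 0 : ℝ) : ℂ) * B k 1 - ((k 1 : ℝ) : ℂ) * B k 0 = -(Complex.I * lam) * B k 2) :=
    fun k hk =>
      crossB lam hlam0 (fun i => (k i : ℝ)) (A k) (hn' k hk) (hp' k hk) (B k) (fun i => hB k i)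
  have hBp : ∀ k ∈ S,
      B k 0 * ((k 0 : ℝ) : ℂ) + B k 1 * ((k 1 : ℝ) : ℂ) + B k 2 * ((k 2 : ℝ) : ℂ) = 0 :=
    fun k hk => Bperp lam (fun i => (k i : ℝ)) (A k) (hp' k hk) (B k) (fun i => hB k i)
  -- conjugation symmetry
  have hBconj : ∀ k ∈ S, ∀ i, (starRingEnd ℂ) (B k i) = B (-k) i := by
    intro k hk i
    rw [hB k i, hB (-k) i, hAneg k hk]
    have h2 : cross3 (fun j => ((-k) j : ℝ) / lam) (A k) i
        = - cross3 (fun j => (k j : ℝ) / lam) (A k) i := by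
      have h3 : (fun j => ((-k) j : ℝ) / lam) = (fun j => -(fun m => (k m : ℝ)) j / lam) := by
        funext j; simp only [Pi.neg_apply]; push_cast; ring
      rw [h3]
      exact crossneg lam (fun j => (k j : ℝ)) (A k) i
    rw [h2]
    exact conj_re_im (A k i) _
  -- realness
  have hWF : ∀ ξ i, Wr ξ i = (∑ k ∈ S, a k * B k i * Ek k ξ).re := by
    intro ξ i; rw [hWr, hW]; rfl
  have hFim : ∀ ξ (i : Fin 3), (∑ k ∈ S, a k * B k i * Ek k ξ).im = 0 := by
    intro ξ i
    refine real_sum S hSneg _ fun k hk => ?_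
    rw [map_mul, map_mul, ha k hk, hBconj k hk i, Econj]
  have hGim : ∀ ξ (i j : Fin 3),
      (∑ k ∈ S, a k * B k i * Ek k ξ * (Complex.I * ((k j : ℝ) : ℂ))).im = 0 := by
    intro ξ i j
    refine real_sum S hSneg _ fun k hk => ?_
    rw [map_mul, map_mul, map_mul, map_mul, ha k hk, hBconj k hk i, Econj,
      Complex.conj_I, Complex.conj_ofReal]
    simp only [Pi.neg_apply]
    push_cast
    ring
  -- derivatives
  have hD : ∀ (i : Fin 3) ξ, HasFDerivAt (fun x => Wr x i)
      (∑ k ∈ S, Complex.reCLM.comp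
        ((a k * B k i * Ek k ξ * Complex.I) • (Complex.ofRealCLM.comp (Lk k)))) ξ := by
    intro i ξ
    have hfun : (fun x => Wr x i) = fun x => ∑ k ∈ S, (a k * B k i * Ek k x).re := by
      funext x; rw [hWF x i, Complex.re_sum]
    rw [hfun]
    exact HasFDerivAt.fun_sum fun k _ => hasFDerivAt_term k (a k * B k i) ξ
  have hDapp : ∀ (i : Fin 3) ξ (j : Fin 3),
      (∑ k ∈ S, Complex.reCLM.comp
        ((a k * B k i * Ek k ξ * Complex.I) • (Complex.ofRealCLM.comp (Lk k))))
        (Pi.single j 1)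
      = (∑ k ∈ S, a k * B k i * Ek k ξ * (Complex.I * ((k j : ℝ) : ℂ))).re := by
    intro i ξ j
    rw [ContinuousLinearMap.sum_apply, Complex.re_sum]
    exact Finset.sum_congr rfl fun k _ => term_deriv_apply k (a k * B k i) ξ j
  have hfd : ∀ ξ (i j : Fin 3), fderiv ℝ (fun x => Wr x i) ξ (Pi.single j 1)
      = (∑ k ∈ S, a k * B k i * Ek k ξ * (Complex.I * ((k j : ℝ) : ℂ))).re := by
    intro ξ i j
    rw [(hD i ξ).fderiv, hDapp]
  -- complex divergence identity
  have hdivC : ∀ ξ,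
      (∑ j, ∑ k ∈ S, a k * B k j * Ek k ξ * (Complex.I * ((k j : ℝ) : ℂ))) = 0 := by
    intro ξ
    rw [Finset.sum_comm]
    refine Finset.sum_eq_zero fun k hk => ?_
    rw [Fin.sum_univ_three]
    linear_combination (a k * Ek k ξ * Complex.I) * hBp k hk
  -- the key complex identity
  have hbeta : ∀ ξ (i : Fin 3),
      (∑ j, (∑ k ∈ S, a k * B k j * Ek k ξ)
        * (∑ k ∈ S, a k * B k i * Ek k ξ * (Complex.I * ((k j : ℝ) : ℂ))))
      = ∑ j, (∑ k ∈ S, a k * B k j * Ek k ξ)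
        * (∑ k ∈ S, a k * B k j * Ek k ξ * (Complex.I * ((k i : ℝ) : ℂ))) := by
    intro ξ i
    have hL : (∑ j, (∑ k ∈ S, a k * B k j * Ek k ξ)
        * (∑ k ∈ S, a k * B k i * Ek k ξ * (Complex.I * ((k j : ℝ) : ℂ))))
        = ∑ l ∈ S, ∑ k ∈ S, (a k * a l) * (Ek k ξ * Ek l ξ) * Complex.I *
            (B k i * (((k 0 : ℝ) : ℂ) * B l 0 + ((k 1 : ℝ) : ℂ) * B l 1
              + ((k 2 : ℝ) : ℂ) * B l 2)) := by
      rw [Fin.sum_univ_three, Finset.sum_mul_sum, Finset.sum_mul_sum, Finset.sum_mul_sum,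
        ← Finset.sum_add_distrib, ← Finset.sum_add_distrib]
      refine Finset.sum_congr rfl fun l _ => ?_
      rw [← Finset.sum_add_distrib, ← Finset.sum_add_distrib]
      refine Finset.sum_congr rfl fun k _ => ?_
      ring
    have hR : (∑ j, (∑ k ∈ S, a k * B k j * Ek k ξ)
        * (∑ k ∈ S, a k * B k j * Ek k ξ * (Complex.I * ((k i : ℝ) : ℂ))))
        = ∑ l ∈ S, ∑ k ∈ S, (a k * a l) * (Ek k ξ * Ek l ξ) * Complex.I *
            (((k i : ℝ) : ℂ) * (B k 0 * B l 0 + B k 1 * B l 1 + B k 2 * B l 2)) := by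
      rw [Fin.sum_univ_three, Finset.sum_mul_sum, Finset.sum_mul_sum, Finset.sum_mul_sum,
        ← Finset.sum_add_distrib, ← Finset.sum_add_distrib]
      refine Finset.sum_congr rfl fun l _ => ?_
      rw [← Finset.sum_add_distrib, ← Finset.sum_add_distrib]
      refine Finset.sum_congr rfl fun k _ => ?_
      ring
    rw [hL, hR]
    refine double_sum_anti S
      (fun k l => (a k * a l) * (Ek k ξ * Ek l ξ) * Complex.I *
        (B k i * (((k 0 : ℝ) : ℂ) * B l 0 + ((k 1 : ℝ) : ℂ) * B l 1
          + ((k 2 : ℝ) : ℂ) * B l 2)))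
      (fun k l => (a k * a l) * (Ek k ξ * Ek l ξ) * Complex.I *
        (((k i : ℝ) : ℂ) * (B k 0 * B l 0 + B k 1 * B l 1 + B k 2 * B l 2)))
      (fun k hk l hl => ?_)
    obtain ⟨hk0, hk1, hk2⟩ := hX k hk
    obtain ⟨hl0, hl1, hl2⟩ := hX l hl
    have h := pairId lam (fun m => (k m : ℝ)) (fun m => (l m : ℝ)) (B k) (B l)
      hk0 hk1 hk2 hl0 hl1 hl2 i
    linear_combination (a k * a l * (Ek k ξ * Ek l ξ) * Complex.I) * h
  -- first bullet
  have hmain : ∀ ξ (i : Fin 3),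
      (∑ j, fderiv ℝ (fun x => Wr x i * Wr x j) ξ (Pi.single j 1))
        = fderiv ℝ (fun x => (∑ j, (Wr x j) ^ 2) / 2) ξ (Pi.single i 1) := by
    intro ξ i
    -- the left-hand side
    have hprod : ∀ j : Fin 3, fderiv ℝ (fun x => Wr x i * Wr x j) ξ (Pi.single j 1)
        = Wr ξ i * (∑ k ∈ S, a k * B k j * Ek k ξ * (Complex.I * ((k j : ℝ) : ℂ))).re
          + Wr ξ j * (∑ k ∈ S, a k * B k i * Ek k ξ * (Complex.I * ((k j : ℝ) : ℂ))).re := by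
      intro j
      rw [((hD i ξ).fun_mul (hD j ξ)).fderiv]
      rw [ContinuousLinearMap.add_apply, ContinuousLinearMap.smul_apply,
        ContinuousLinearMap.smul_apply, smul_eq_mul, smul_eq_mul, hDapp, hDapp]
    -- the right-hand side
    have hfun2 : (fun x => (∑ j, (Wr x j) ^ 2) / 2)
        = fun x => (∑ j, Wr x j * Wr x j) * (2⁻¹ : ℝ) := by
      funext x
      rw [div_eq_mul_inv]
      congr 1
      exact Finset.sum_congr rfl fun j _ => pow_two (Wr x j)
    have hsum : HasFDerivAt (fun x => ∑ j, Wr x j * Wr x j)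
        (∑ j, (Wr ξ j • (∑ k ∈ S, Complex.reCLM.comp
            ((a k * B k j * Ek k ξ * Complex.I) • (Complex.ofRealCLM.comp (Lk k))))
          + Wr ξ j • (∑ k ∈ S, Complex.reCLM.comp
            ((a k * B k j * Ek k ξ * Complex.I) • (Complex.ofRealCLM.comp (Lk k)))))) ξ :=
      HasFDerivAt.fun_sum fun j _ => (hD j ξ).fun_mul (hD j ξ)
    have hhalf := hsum.mul_const (2⁻¹ : ℝ)
    have hRHS : fderiv ℝ (fun x => (∑ j, (Wr x j) ^ 2) / 2) ξ (Pi.single i 1)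
        = ∑ j, Wr ξ j * (∑ k ∈ S, a k * B k j * Ek k ξ * (Complex.I * ((k i : ℝ) : ℂ))).re := by
      rw [hfun2, hhalf.fderiv]
      rw [ContinuousLinearMap.smul_apply, ContinuousLinearMap.sum_apply]
      rw [Finset.smul_sum]
      refine Finset.sum_congr rfl fun j _ => ?_
      simp only [ContinuousLinearMap.add_apply, ContinuousLinearMap.smul_apply,
        ContinuousLinearMap.coe_smul', Pi.smul_apply, hDapp j ξ i, smul_eq_mul]
      ring
    rw [hRHS]
    rw [Finset.sum_congr rfl fun j _ => hprod j]
    rw [Finset.sum_add_distrib]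
    have hzero : (∑ j, Wr ξ i
        * (∑ k ∈ S, a k * B k j * Ek k ξ * (Complex.I * ((k j : ℝ) : ℂ))).re) = 0 := by
      rw [← Finset.mul_sum]
      rw [show (∑ j, (∑ k ∈ S, a k * B k j * Ek k ξ * (Complex.I * ((k j : ℝ) : ℂ))).re)
        = (∑ j, ∑ k ∈ S, a k * B k j * Ek k ξ * (Complex.I * ((k j : ℝ) : ℂ))).re from
        (Complex.re_sum _ _).symm]
      rw [hdivC ξ]
      simp
    rw [hzero, zero_add]
    -- convert real products into real parts of complex products
    have hconv : ∀ (m : Fin 3) (G : ℂ), G.im = 0 →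
        Wr ξ m * G.re = ((∑ k ∈ S, a k * B k m * Ek k ξ) * G).re := by
      intro m G hG
      rw [hWF ξ m]
      exact mul_re_of_im _ _ (hFim ξ m) hG
    calc (∑ j, Wr ξ j * (∑ k ∈ S, a k * B k i * Ek k ξ * (Complex.I * ((k j : ℝ) : ℂ))).re)
        = ∑ j, ((∑ k ∈ S, a k * B k j * Ek k ξ)
            * (∑ k ∈ S, a k * B k i * Ek k ξ * (Complex.I * ((k j : ℝ) : ℂ)))).re :=
          Finset.sum_congr rfl fun j _ => hconv j _ (hGim ξ i j)
      _ = (∑ j, (∑ k ∈ S, a k * B k j * Ek k ξ)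
            * (∑ k ∈ S, a k * B k i * Ek k ξ * (Complex.I * ((k j : ℝ) : ℂ)))).re :=
          (Complex.re_sum _ _).symm
      _ = (∑ j, (∑ k ∈ S, a k * B k j * Ek k ξ)
            * (∑ k ∈ S, a k * B k j * Ek k ξ * (Complex.I * ((k i : ℝ) : ℂ)))).re := by
          rw [hbeta ξ i]
      _ = ∑ j, ((∑ k ∈ S, a k * B k j * Ek k ξ)
            * (∑ k ∈ S, a k * B k j * Ek k ξ * (Complex.I * ((k i : ℝ) : ℂ)))).re :=
          Complex.re_sum _ _
      _ = ∑ j, Wr ξ j * (∑ k ∈ S, a k * B k j * Ek k ξ * (Complex.I * ((k i : ℝ) : ℂ))).re :=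
          Finset.sum_congr rfl fun j _ => (hconv j _ (hGim ξ j i)).symm
  refine ⟨hmain, ?_, ?_⟩
  · intro ξ i
    have hneg : fderiv ℝ (fun x => -((∑ j, (Wr x j) ^ 2) / 2)) ξ
        = -fderiv ℝ (fun x => (∑ j, (Wr x j) ^ 2) / 2) ξ := fderiv_neg
    rw [hmain ξ i, hneg, ContinuousLinearMap.neg_apply]
    ring
  · intro ξ
    rw [Finset.sum_congr rfl fun i _ => hfd ξ i i]
    rw [show (∑ i, (∑ k ∈ S, a k * B k i * Ek k ξ * (Complex.I * ((k i : ℝ) : ℂ))).re)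
      = (∑ i, ∑ k ∈ S, a k * B k i * Ek k ξ * (Complex.I * ((k i : ℝ) : ℂ))).re from
      (Complex.re_sum _ _).symm]
    rw [hdivC ξ]
    simp
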